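/- For all integers n ≥ 3 and k ≥ 1: (i) if k ≤ (n choose 2), then M(k, n+1) ≥ M(k,n) + 1; (ii) if k < (n choose 2), then M(k+1, n) ≥ M(k,n) + 1/3. -/

import Mathlib

/-- Number of edges of a finite simple graph. -/
noncomputable def edgeCnt {V : Type} [Fintype V] (G : SimpleGraph V) : ℕ :=
  G.edgeSet.ncard

/-- Number of edges of `G` with both endpoints in `X`. -/
noncomputable def inducedEdgeCnt {V : Type} [Fintype V] (G : SimpleGraph V) (X : Finset V) : ℕ :=
  {e : Sym2 V | e ∈ G.edgeSet ∧ ∀ v ∈ e, v ∈ X}.ncard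

/-- Maximum average degree of a finite simple graph. -/
noncomputable def Mad {V : Type} [Fintype V] (G : SimpleGraph V) : ℝ :=
  sSup {d : ℝ | ∃ X : Finset V, X.Nonempty ∧ d = 2 * (inducedEdgeCnt G X : ℝ) / (X.card : ℝ)}

/-- A `k`-decomposition of the complete graph `K_n`. -/
def IsKDecomp {k n : ℕ} (G : Fin k → SimpleGraph (Fin n)) : Prop :=
  (∀ i j, i ≠ j → Disjoint (G i).edgeSet (G j).edgeSet) ∧
  (⋃ i, (G i).edgeSet) = (⊤ : SimpleGraph (Fin n)).edgeSet

/-- `M(k,n)`: maximum of `Mad(G_1)+…+Mad(G_k)` over all `k`-decompositions of `K_n`. -/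
noncomputable def MSum (k n : ℕ) : ℝ :=
  sSup {s : ℝ | ∃ G : Fin k → SimpleGraph (Fin n), IsKDecomp G ∧ s = ∑ i, Mad (G i)}

/-- `M^L(k,N)`: maximum of `Mad(G_1)+…+Mad(G_k)` over all lists of `k` finite graphs
with `N` edges in total. -/
noncomputable def MSumL (k N : ℕ) : ℝ :=
  sSup {s : ℝ | ∃ (V : Fin k → Type) (hV : ∀ i, Fintype (V i)) (G : ∀ i, SimpleGraph (V i)),
    (∑ i, @edgeCnt (V i) (hV i) (G i)) = N ∧ s = ∑ i, @Mad (V i) (hV i) (G i)}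

/-- `g(m)`: maximum of `Mad(G)` over all finite simple graphs with exactly `m` edges. -/
noncomputable def gMax (m : ℕ) : ℝ :=
  sSup {d : ℝ | ∃ (V : Type) (hV : Fintype V) (G : SimpleGraph V),
    @edgeCnt V hV G = m ∧ d = @Mad V hV G}

/-- The complete graph on the vertex subset `S` inside `Fin n`. -/
def cliqueOn {n : ℕ} (S : Finset (Fin n)) : SimpleGraph (Fin n) :=
  SimpleGraph.fromRel (fun a b => a ∈ S ∧ b ∈ S)


section Helpers
variable {V : Type} [Fintype V]

lemma madSet_finite (G : SimpleGraph V) :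
    {d : ℝ | ∃ X : Finset V, X.Nonempty ∧ d = 2 * (inducedEdgeCnt G X : ℝ) / (X.card : ℝ)}.Finite := by
  have : {d : ℝ | ∃ X : Finset V, X.Nonempty ∧ d = 2 * (inducedEdgeCnt G X : ℝ) / (X.card : ℝ)}
      = (fun X : Finset V => 2 * (inducedEdgeCnt G X : ℝ) / (X.card : ℝ)) '' {X | X.Nonempty} := by
    ext d; simp only [Set.mem_setOf_eq, Set.mem_image]
    constructor
    · rintro ⟨X, hX, rfl⟩; exact ⟨X, hX, rfl⟩
    · rintro ⟨X, hX, rfl⟩; exact ⟨X, hX, rfl⟩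
  rw [this]
  exact (Set.toFinite _).image _

lemma le_Mad (G : SimpleGraph V) {X : Finset V} (hX : X.Nonempty) :
    2 * (inducedEdgeCnt G X : ℝ) / (X.card : ℝ) ≤ Mad G :=
  le_csSup (madSet_finite G).bddAbove ⟨X, hX, rfl⟩

lemma mad_exists [Nonempty V] (G : SimpleGraph V) :
    ∃ X : Finset V, X.Nonempty ∧ Mad G = 2 * (inducedEdgeCnt G X : ℝ) / (X.card : ℝ) := by
  have hne : {d : ℝ | ∃ X : Finset V, X.Nonempty ∧
      d = 2 * (inducedEdgeCnt G X : ℝ) / (X.card : ℝ)}.Nonempty :=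
    ⟨_, ⟨{Classical.arbitrary V}, Finset.singleton_nonempty _, rfl⟩⟩
  exact hne.csSup_mem (madSet_finite G)

lemma mad_nonneg (G : SimpleGraph V) : 0 ≤ Mad G := by
  apply Real.sSup_nonneg
  rintro d ⟨X, hX, rfl⟩
  positivity

lemma mad_le_bound (G : SimpleGraph V) :
    Mad G ≤ 2 * (Fintype.card (Sym2 V) : ℝ) := by
  apply Real.sSup_le
  · rintro d ⟨X, hX, rfl⟩
    have h1 : (1 : ℝ) ≤ (X.card : ℝ) := by
      exact_mod_cast Nat.one_le_iff_ne_zero.mpr (Finset.card_ne_zero_of_mem hX.choose_spec)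
    have h2 : (inducedEdgeCnt G X : ℝ) ≤ (Fintype.card (Sym2 V) : ℝ) := by
      have : inducedEdgeCnt G X ≤ Fintype.card (Sym2 V) := by
        rw [inducedEdgeCnt]
        calc _ ≤ (Set.univ : Set (Sym2 V)).ncard := Set.ncard_le_ncard (Set.subset_univ _) (Set.toFinite _)
        _ = _ := by rw [Set.ncard_univ, Nat.card_eq_fintype_card]
      exact_mod_cast this
    calc 2 * (inducedEdgeCnt G X : ℝ) / (X.card : ℝ) ≤ 2 * (inducedEdgeCnt G X : ℝ) / 1 := by
          apply div_le_div_of_nonneg_left (by positivity) (by norm_num) h1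
      _ = 2 * (inducedEdgeCnt G X : ℝ) := by ring
      _ ≤ _ := by linarith
  · positivity

lemma two_inducedEdgeCnt_le (G : SimpleGraph V) (X : Finset V) :
    2 * inducedEdgeCnt G X ≤ X.card * (X.card - 1) := by
  classical
  set H : SimpleGraph (X : Set V) := G.induce (X : Set V) with hH
  letI : Fintype H.edgeSet := Set.Finite.fintype (Set.toFinite _)
  have himg : {e : Sym2 V | e ∈ G.edgeSet ∧ ∀ v ∈ e, v ∈ X}
      = Sym2.map (Subtype.val) '' H.edgeSet := by
    ext e
    induction e using Sym2.ind with
    | _ a b =>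
      simp only [Set.mem_setOf_eq, Set.mem_image, SimpleGraph.mem_edgeSet]
      constructor
      · rintro ⟨hadj, hmem⟩
        have ha : a ∈ X := hmem a (by simp)
        have hb : b ∈ X := hmem b (by simp)
        exact ⟨s(⟨a, ha⟩, ⟨b, hb⟩), by simpa [hH] using hadj, by simp⟩
      · rintro ⟨e', he', hmap⟩
        induction e' using Sym2.ind with
        | _ u v =>
          simp only [Sym2.map_pair_eq, Sym2.eq_iff] at hmap
          have hadj : G.Adj ↑u ↑v := by
            rw [SimpleGraph.mem_edgeSet] at he'; simpa [hH] using he'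
          rcases hmap with ⟨h1, h2⟩ | ⟨h1, h2⟩
          · subst h1; subst h2
            exact ⟨hadj, by rintro w hw; rcases Sym2.mem_iff.mp hw with rfl | rfl <;> simp⟩
          · subst h1; subst h2
            exact ⟨hadj.symm, by rintro w hw; rcases Sym2.mem_iff.mp hw with rfl | rfl <;> simp⟩
  have hinj : Function.Injective (Sym2.map (Subtype.val : ↥(X : Set V) → V)) :=
    by exact Sym2.map.injective Subtype.val_injective
  have hcard : inducedEdgeCnt G X = H.edgeFinset.card := by
    rw [inducedEdgeCnt, himg, Set.ncard_image_of_injective _ hinj,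
      Set.ncard_eq_toFinset_card']
    congr 1
  have hle : H.edgeFinset.card ≤ (Fintype.card (X : Set V)).choose 2 :=
    SimpleGraph.card_edgeFinset_le_card_choose_two
  have hXcard : Fintype.card (X : Set V) = X.card := Fintype.card_coe X
  rw [hcard]
  calc 2 * H.edgeFinset.card ≤ 2 * (X.card.choose 2) := by
        rw [← hXcard]; omega
    _ ≤ X.card * (X.card - 1) := by
        rw [Nat.choose_two_right]
        omega

end Helpers

section Lift
variable {n : ℕ}

noncomputable def liftG (H : SimpleGraph (Fin n)) : SimpleGraph (Fin (n + 1)) :=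
  SimpleGraph.fromEdgeSet (Sym2.map Fin.castSucc '' H.edgeSet)

noncomputable def starG (n : ℕ) : SimpleGraph (Fin (n + 1)) :=
  SimpleGraph.fromEdgeSet {e | ∃ x : Fin n, e = s(Fin.last n, Fin.castSucc x)}

lemma edgeSet_liftG (H : SimpleGraph (Fin n)) :
    (liftG H).edgeSet = Sym2.map Fin.castSucc '' H.edgeSet := by
  rw [liftG, SimpleGraph.edgeSet_fromEdgeSet]
  have hnd : ∀ e ∈ Sym2.map Fin.castSucc '' H.edgeSet, ¬ e.IsDiag := by
    rintro e ⟨e', he', rfl⟩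
    rw [Sym2.isDiag_map (Fin.castSucc_injective n)]
    exact SimpleGraph.not_isDiag_of_mem_edgeSet _ he'
  ext e
  exact ⟨fun h => h.1, fun h => ⟨h, hnd e h⟩⟩

lemma edgeSet_starG :
    (starG n).edgeSet = {e | ∃ x : Fin n, e = s(Fin.last n, Fin.castSucc x)} := by
  rw [starG, SimpleGraph.edgeSet_fromEdgeSet]
  have hnd : ∀ e ∈ {e : Sym2 (Fin (n+1)) | ∃ x : Fin n, e = s(Fin.last n, Fin.castSucc x)},
      ¬ e.IsDiag := by
    rintro e ⟨x, rfl⟩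
    simp only [Sym2.isDiag_iff_proj_eq]
    exact (Fin.castSucc_lt_last x).ne'
  ext e
  exact ⟨fun h => h.1, fun h => ⟨h, hnd e h⟩⟩

lemma mad_liftG_ge (H : SimpleGraph (Fin n)) (hn : 0 < n) : Mad H ≤ Mad (liftG H) := by
  haveI : Nonempty (Fin n) := ⟨⟨0, hn⟩⟩
  obtain ⟨X, hX, hEq⟩ := mad_exists H
  set X' : Finset (Fin (n+1)) := X.map Fin.castSuccEmb with hX'
  have hsub : Sym2.map Fin.castSucc '' {e : Sym2 (Fin n) | e ∈ H.edgeSet ∧ ∀ v ∈ e, v ∈ X}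
      ⊆ {e : Sym2 (Fin (n+1)) | e ∈ (liftG H).edgeSet ∧ ∀ v ∈ e, v ∈ X'} := by
    rintro e ⟨e', ⟨he', hv⟩, rfl⟩
    refine ⟨by rw [edgeSet_liftG]; exact ⟨e', he', rfl⟩, ?_⟩
    intro v hvmem
    rw [Sym2.mem_map] at hvmem
    obtain ⟨w, hw, rfl⟩ := hvmem
    rw [hX', Finset.mem_map]
    exact ⟨w, hv w hw, rfl⟩
  have hcnt : inducedEdgeCnt H X ≤ inducedEdgeCnt (liftG H) X' := by
    rw [inducedEdgeCnt, inducedEdgeCnt,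
      ← Set.ncard_image_of_injective _ (Sym2.map.injective (Fin.castSucc_injective n))]
    exact Set.ncard_le_ncard hsub (Set.toFinite _)
  have hcard : X'.card = X.card := Finset.card_map _
  have hxpos : (0 : ℝ) < (X.card : ℝ) := by exact_mod_cast hX.card_pos
  calc Mad H = 2 * (inducedEdgeCnt H X : ℝ) / (X.card : ℝ) := hEq
    _ ≤ 2 * (inducedEdgeCnt (liftG H) X' : ℝ) / (X'.card : ℝ) := by
        rw [hcard]; gcongr
    _ ≤ Mad (liftG H) := le_Mad _ (show X'.Nonempty from hX.map)

lemma mad_liftG_sup_star (H : SimpleGraph (Fin n)) (hn : 0 < n) :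
    Mad H + 1 ≤ Mad (liftG H ⊔ starG n) := by
  haveI : Nonempty (Fin n) := ⟨⟨0, hn⟩⟩
  obtain ⟨X, hX, hEq⟩ := mad_exists H
  have hlastnm : Fin.last n ∉ X.map Fin.castSuccEmb := by
    rw [Finset.mem_map]
    rintro ⟨x, -, hx⟩
    exact (Fin.castSucc_lt_last x).ne hx
  set X' : Finset (Fin (n+1)) := insert (Fin.last n) (X.map Fin.castSuccEmb) with hX'
  have hcard : X'.card = X.card + 1 := by
    rw [hX', Finset.card_insert_of_notMem hlastnm, Finset.card_map]
  set A := {e : Sym2 (Fin n) | e ∈ H.edgeSet ∧ ∀ v ∈ e, v ∈ X} with hA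
  set B := (fun x : Fin n => s(Fin.last n, Fin.castSucc x)) '' (X : Set (Fin n)) with hB
  have hUsub : (Sym2.map Fin.castSucc '' A) ∪ B
      ⊆ {e : Sym2 (Fin (n+1)) | e ∈ (liftG H ⊔ starG n).edgeSet ∧ ∀ v ∈ e, v ∈ X'} := by
    rintro e (⟨e', ⟨he', hv⟩, rfl⟩ | ⟨x, hx, rfl⟩)
    · refine ⟨?_, ?_⟩
      · rw [SimpleGraph.edgeSet_sup]
        exact Or.inl (by rw [edgeSet_liftG]; exact ⟨e', he', rfl⟩)
      · intro v hvmem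
        rw [Sym2.mem_map] at hvmem
        obtain ⟨w, hw, rfl⟩ := hvmem
        rw [hX']
        exact Finset.mem_insert_of_mem (Finset.mem_map.mpr ⟨w, hv w hw, rfl⟩)
    · refine ⟨?_, ?_⟩
      · rw [SimpleGraph.edgeSet_sup]
        exact Or.inr (by rw [edgeSet_starG]; exact ⟨x, rfl⟩)
      · intro v hvmem
        rcases Sym2.mem_iff.mp hvmem with rfl | rfl
        · rw [hX']; exact Finset.mem_insert_self _ _
        · rw [hX']
          exact Finset.mem_insert_of_mem (Finset.mem_map.mpr ⟨x, hx, rfl⟩)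
  have hdisjAB : Disjoint (Sym2.map Fin.castSucc '' A) B := by
    rw [Set.disjoint_left]
    rintro e ⟨e', -, rfl⟩ ⟨x, -, hx⟩
    simp only at hx
    have : Fin.last n ∈ Sym2.map Fin.castSucc e' := hx ▸ Sym2.mem_mk_left _ _
    rw [Sym2.mem_map] at this
    obtain ⟨w, -, hw⟩ := this
    exact (Fin.castSucc_lt_last w).ne hw
  have hBcard : B.ncard = X.card := by
    rw [hB, Set.ncard_image_of_injOn, Set.ncard_coe_finset]
    intro x _ y _ hxy
    simp only [Sym2.eq_iff] at hxy
    rcases hxy with ⟨-, h2⟩ | ⟨h1, -⟩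
    · exact Fin.castSucc_injective n h2
    · exact absurd h1.symm (Fin.castSucc_lt_last y).ne
  have hcnt : inducedEdgeCnt H X + X.card ≤ inducedEdgeCnt (liftG H ⊔ starG n) X' := by
    have h1 : ((Sym2.map Fin.castSucc '' A) ∪ B).ncard = A.ncard + X.card := by
      rw [Set.ncard_union_eq hdisjAB (Set.toFinite _) (Set.toFinite _),
        Set.ncard_image_of_injective _ (Sym2.map.injective (Fin.castSucc_injective n)), hBcard]
    calc inducedEdgeCnt H X + X.card = ((Sym2.map Fin.castSucc '' A) ∪ B).ncard := by
          rw [h1]; rfl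
      _ ≤ _ := Set.ncard_le_ncard hUsub (Set.toFinite _)
  -- numeric part
  have hxpos : (0 : ℝ) < (X.card : ℝ) := by exact_mod_cast hX.card_pos
  have hkey : 2 * (inducedEdgeCnt H X : ℝ) ≤ (X.card : ℝ) * ((X.card : ℝ) - 1) := by
    have h1 : 1 ≤ X.card := hX.card_pos
    have h2 : ((2 * inducedEdgeCnt H X : ℕ) : ℝ) ≤ ((X.card * (X.card - 1) : ℕ) : ℝ) := by
      exact_mod_cast two_inducedEdgeCnt_le H X
    push_cast [Nat.cast_sub h1] at h2
    linarith
  have hnum : 2 * (inducedEdgeCnt H X : ℝ) / (X.card : ℝ) + 1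
      ≤ 2 * ((inducedEdgeCnt H X : ℝ) + (X.card : ℝ)) / ((X.card : ℝ) + 1) := by
    rw [div_add' _ _ _ (ne_of_gt hxpos), div_le_div_iff₀ hxpos (by linarith)]
    nlinarith
  calc Mad H + 1 = 2 * (inducedEdgeCnt H X : ℝ) / (X.card : ℝ) + 1 := by rw [hEq]
    _ ≤ 2 * ((inducedEdgeCnt H X : ℝ) + (X.card : ℝ)) / ((X.card : ℝ) + 1) := hnum
    _ ≤ 2 * (inducedEdgeCnt (liftG H ⊔ starG n) X' : ℝ) / (X'.card : ℝ) := by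
        rw [hcard]
        have h2 : (0:ℝ) < (X.card : ℝ) + 1 := by linarith
        have h3 : (inducedEdgeCnt H X : ℝ) + (X.card : ℝ)
            ≤ (inducedEdgeCnt (liftG H ⊔ starG n) X' : ℝ) := by exact_mod_cast hcnt
        push_cast
        rw [div_le_div_iff₀ h2 h2]
        nlinarith
    _ ≤ Mad (liftG H ⊔ starG n) := le_Mad _ (by rw [hX']; exact Finset.insert_nonempty _ _)

end Lift

lemma decompSet_bddAbove (k n : ℕ) :
    BddAbove {s : ℝ | ∃ G : Fin k → SimpleGraph (Fin n), IsKDecomp G ∧ s = ∑ i, Mad (G i)} := by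
  refine ⟨k * (2 * (Fintype.card (Sym2 (Fin n)) : ℝ)), ?_⟩
  rintro s ⟨G, -, rfl⟩
  calc ∑ i, Mad (G i) ≤ ∑ _i : Fin k, 2 * (Fintype.card (Sym2 (Fin n)) : ℝ) :=
        Finset.sum_le_sum fun i _ => mad_le_bound (G i)
    _ = k * (2 * (Fintype.card (Sym2 (Fin n)) : ℝ)) := by
        rw [Finset.sum_const, Finset.card_univ, Fintype.card_fin, nsmul_eq_mul]

lemma decompSet_nonempty (k n : ℕ) (hk : 1 ≤ k) :
    {s : ℝ | ∃ G : Fin k → SimpleGraph (Fin n), IsKDecomp G ∧ s = ∑ i, Mad (G i)}.Nonempty := by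
  set i0 : Fin k := ⟨0, hk⟩
  set G : Fin k → SimpleGraph (Fin n) := fun i => if i = i0 then ⊤ else ⊥ with hG
  refine ⟨∑ i, Mad (G i), G, ⟨?_, ?_⟩, rfl⟩
  · intro i j hij
    rcases eq_or_ne i i0 with rfl | hi
    · have : G j = ⊥ := if_neg (by simpa using hij.symm)
      rw [this]; simp
    · have : G i = ⊥ := if_neg hi
      rw [this]; simp
  · ext e
    simp only [Set.mem_iUnion]
    constructor
    · rintro ⟨i, hi⟩
      rcases eq_or_ne i i0 with rfl | hne
      · simpa [hG] using hi
      · rw [hG] at hi; simp [if_neg hne] at hi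
    · intro he
      exact ⟨i0, by simpa [hG] using he⟩

lemma part_one (n k : ℕ) (hn : 3 ≤ n) (hk : 1 ≤ k) : MSum k n + 1 ≤ MSum k (n + 1) := by
  have hnpos : 0 < n := by omega
  have hbdd := decompSet_bddAbove k (n + 1)
  have hne := decompSet_nonempty k n hk
  have key : MSum k n ≤ MSum k (n + 1) - 1 := by
    apply csSup_le hne
    rintro s ⟨G, ⟨hdisj, hcover⟩, rfl⟩
    set i0 : Fin k := ⟨0, hk⟩ with hi0
    let G' : Fin k → SimpleGraph (Fin (n + 1)) :=
      fun i => if i = i0 then liftG (G i) ⊔ starG n else liftG (G i)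
    have hG'eq : ∀ i, G' i = if i = i0 then liftG (G i) ⊔ starG n else liftG (G i) :=
      fun i => rfl
    have hdisjImg : ∀ i j, i ≠ j →
        Disjoint (Sym2.map Fin.castSucc '' (G i).edgeSet)
          (Sym2.map Fin.castSucc '' (G j).edgeSet) := by
      intro i j hij
      rw [Set.disjoint_left]
      rintro e ⟨e', he', rfl⟩ ⟨e'', he'', hx⟩
      have heq : e'' = e' := Sym2.map.injective (Fin.castSucc_injective n) hx
      subst heq
      exact (Set.disjoint_left.mp (hdisj i j hij) he' he'')
    have hdisjStar : ∀ j : Fin k,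
        Disjoint {e : Sym2 (Fin (n+1)) | ∃ x : Fin n, e = s(Fin.last n, Fin.castSucc x)}
          (Sym2.map Fin.castSucc '' (G j).edgeSet) := by
      intro j
      rw [Set.disjoint_left]
      rintro e ⟨x, rfl⟩ ⟨e', -, hx⟩
      have : Fin.last n ∈ Sym2.map Fin.castSucc e' := hx ▸ Sym2.mem_mk_left _ _
      rw [Sym2.mem_map] at this
      obtain ⟨w, -, hw⟩ := this
      exact (Fin.castSucc_lt_last w).ne hw
    have hdec' : IsKDecomp G' := by
      constructor
      · intro i j hij
        rcases eq_or_ne i i0 with rfl | hi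
        · rcases eq_or_ne j i0 with rfl | hj
          · exact absurd rfl hij
          · rw [hG'eq, hG'eq, if_pos rfl, if_neg hj, SimpleGraph.edgeSet_sup,
              edgeSet_liftG, edgeSet_liftG, edgeSet_starG]
            exact Set.disjoint_union_left.mpr ⟨hdisjImg _ _ hij, hdisjStar j⟩
        · rcases eq_or_ne j i0 with rfl | hj
          · rw [hG'eq, hG'eq, if_pos rfl, if_neg hi, SimpleGraph.edgeSet_sup,
              edgeSet_liftG, edgeSet_liftG, edgeSet_starG]
            exact (Set.disjoint_union_left.mpr
              ⟨hdisjImg _ _ hij.symm, hdisjStar i⟩).symm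
          · rw [hG'eq, hG'eq, if_neg hi, if_neg hj, edgeSet_liftG, edgeSet_liftG]
            exact hdisjImg _ _ hij
      · ext e
        simp only [Set.mem_iUnion]
        constructor
        · rintro ⟨i, hi⟩
          exact SimpleGraph.edgeSet_subset_edgeSet.mpr le_top hi
        · intro he
          rw [SimpleGraph.edgeSet_top] at he
          induction e using Sym2.ind with
          | _ a b =>
            have hab : a ≠ b := by simpa using he
            by_cases ha : a = Fin.last n
            · subst ha
              have hb : b ≠ Fin.last n := fun h => hab h.symm
              refine ⟨i0, ?_⟩
              rw [hG'eq, if_pos rfl, SimpleGraph.edgeSet_sup, edgeSet_starG]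
              exact Or.inr ⟨b.castPred hb, by rw [Fin.castSucc_castPred]⟩
            · by_cases hb : b = Fin.last n
              · subst hb
                refine ⟨i0, ?_⟩
                rw [hG'eq, if_pos rfl, SimpleGraph.edgeSet_sup, edgeSet_starG]
                exact Or.inr ⟨a.castPred ha, by rw [Sym2.eq_swap, Fin.castSucc_castPred]⟩
              · set a' := a.castPred ha with ha'
                set b' := b.castPred hb with hb'
                have hab' : a' ≠ b' := by
                  intro h
                  apply hab
                  rw [← Fin.castSucc_castPred a ha, ← Fin.castSucc_castPred b hb, ← ha', ← hb', h]
                have : s(a', b') ∈ (⊤ : SimpleGraph (Fin n)).edgeSet := by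
                  rw [SimpleGraph.edgeSet_top]; simpa using hab'
                rw [← hcover, Set.mem_iUnion] at this
                obtain ⟨i, hi⟩ := this
                refine ⟨i, ?_⟩
                have hmem : s(a, b) ∈ Sym2.map Fin.castSucc '' (G i).edgeSet := by
                  refine ⟨s(a', b'), hi, ?_⟩
                  rw [Sym2.map_pair_eq, ha', hb', Fin.castSucc_castPred, Fin.castSucc_castPred]
                rcases eq_or_ne i i0 with rfl | hne2
                · rw [hG'eq, if_pos rfl, SimpleGraph.edgeSet_sup, edgeSet_liftG]
                  exact Or.inl hmem
                · rw [hG'eq, if_neg hne2, edgeSet_liftG]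
                  exact hmem
    have hsum : ∑ i, Mad (G i) + 1 ≤ ∑ i, Mad (G' i) := by
      have key2 : ∀ i ∈ Finset.univ, Mad (G i) + (if i = i0 then (1:ℝ) else 0) ≤ Mad (G' i) := by
        intro i _
        rcases eq_or_ne i i0 with rfl | hne2
        · rw [if_pos rfl, hG'eq, if_pos rfl]
          exact mad_liftG_sup_star (G i0) hnpos
        · rw [if_neg hne2, hG'eq, if_neg hne2, add_zero]
          exact mad_liftG_ge (G i) hnpos
      calc ∑ i, Mad (G i) + 1
          = ∑ i, (Mad (G i) + if i = i0 then (1:ℝ) else 0) := by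
            rw [Finset.sum_add_distrib, Finset.sum_ite_eq' Finset.univ i0 (fun _ => (1:ℝ))]
            simp
        _ ≤ ∑ i, Mad (G' i) := Finset.sum_le_sum key2
    have hmem : (∑ i, Mad (G' i)) ∈
        {s : ℝ | ∃ G : Fin k → SimpleGraph (Fin (n+1)), IsKDecomp G ∧ s = ∑ i, Mad (G i)} :=
      ⟨G', hdec', rfl⟩
    have := le_csSup hbdd hmem
    rw [MSum]
    linarith
  rw [MSum, MSum] at *
  linarith

lemma mad_single_edge {n : ℕ} (e0 : Sym2 (Fin n)) (hnd : ¬ e0.IsDiag) :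
    1 ≤ Mad (SimpleGraph.fromEdgeSet {e0}) := by
  obtain ⟨a, b, rfl⟩ : ∃ a b, e0 = s(a, b) :=
    e0.inductionOn (fun x y => ⟨x, y, rfl⟩)
  have hab : a ≠ b := by simpa using hnd
  have hmem : s(a, b) ∈ {e : Sym2 (Fin n) |
      e ∈ (SimpleGraph.fromEdgeSet {s(a, b)}).edgeSet ∧
        ∀ v ∈ e, v ∈ ({a, b} : Finset (Fin n))} := by
    refine ⟨?_, ?_⟩
    · rw [SimpleGraph.edgeSet_fromEdgeSet]
      exact ⟨rfl, by simpa using hab⟩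
    · intro v hv
      rcases Sym2.mem_iff.mp hv with rfl | rfl <;> simp
  have h1 : 1 ≤ inducedEdgeCnt (SimpleGraph.fromEdgeSet {s(a, b)}) ({a, b} : Finset (Fin n)) := by
    rw [inducedEdgeCnt]
    have := (Set.ncard_pos (Set.toFinite _)).mpr ⟨_, hmem⟩
    omega
  have hcard : ({a, b} : Finset (Fin n)).card = 2 := Finset.card_pair hab
  have hle := le_Mad (SimpleGraph.fromEdgeSet {s(a, b)})
    (X := ({a, b} : Finset (Fin n))) ⟨a, by simp⟩
  rw [hcard] at hle
  have h1' : (1 : ℝ) ≤ (inducedEdgeCnt (SimpleGraph.fromEdgeSet {s(a, b)})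
      ({a, b} : Finset (Fin n)) : ℝ) := by exact_mod_cast h1
  calc (1:ℝ) = 2 * 1 / 2 := by norm_num
    _ ≤ 2 * (inducedEdgeCnt (SimpleGraph.fromEdgeSet {s(a, b)})
        ({a, b} : Finset (Fin n)) : ℝ) / 2 := by linarith
    _ ≤ _ := by exact_mod_cast hle

lemma part_two (n k : ℕ) (hn : 3 ≤ n) (hk : 1 ≤ k) (hklt : k < n.choose 2) :
    MSum k n + 1 / 3 ≤ MSum (k + 1) n := by
  classical
  haveI : Nonempty (Fin n) := ⟨⟨0, by omega⟩⟩
  have hbdd := decompSet_bddAbove (k + 1) n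
  have hne := decompSet_nonempty k n hk
  have key : MSum k n ≤ MSum (k + 1) n - 1 / 3 := by
    apply csSup_le hne
    rintro s ⟨G, ⟨hdisj, hcover⟩, rfl⟩
    -- total number of edges
    have htot : ∑ i, ((G i).edgeSet.ncard) = n.choose 2 := by
      have hbU : Finset.univ.biUnion (fun i => ((G i).edgeSet.toFinite).toFinset)
          = ((⊤ : SimpleGraph (Fin n)).edgeSet.toFinite).toFinset := by
        ext e
        simp only [Finset.mem_biUnion, Set.Finite.mem_toFinset, Finset.mem_univ, true_and]
        constructor
        · rintro ⟨i, hi⟩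
          rw [← hcover]
          exact Set.mem_iUnion.mpr ⟨i, hi⟩
        · intro h
          rw [← hcover] at h
          exact Set.mem_iUnion.mp h
      have hdisjF : ∀ i ∈ Finset.univ, ∀ j ∈ Finset.univ, i ≠ j →
          Disjoint ((G i).edgeSet.toFinite).toFinset ((G j).edgeSet.toFinite).toFinset := by
        intro i _ j _ hij
        rw [Finset.disjoint_left]
        intro e hei hej
        rw [Set.Finite.mem_toFinset] at hei hej
        exact Set.disjoint_left.mp (hdisj i j hij) hei hej
      have h1 := Finset.card_biUnion hdisjF
      have h3 : ((⊤ : SimpleGraph (Fin n)).edgeSet.toFinite).toFinset.card = n.choose 2 := by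
        have htop := SimpleGraph.card_edgeFinset_top_eq_card_choose_two (V := Fin n)
        rw [Fintype.card_fin] at htop
        rw [← htop]
        congr 1
        ext e
        rw [Set.Finite.mem_toFinset, SimpleGraph.mem_edgeFinset]
      calc ∑ i, ((G i).edgeSet.ncard)
          = ∑ i, ((G i).edgeSet.toFinite).toFinset.card :=
            Finset.sum_congr rfl (fun i _ => Set.ncard_eq_toFinset_card _ _)
        _ = n.choose 2 := by rw [← h1, hbU, h3]
    have hex : ∃ i0 : Fin k, 2 ≤ (G i0).edgeSet.ncard := by
      by_contra h
      push_neg at h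
      have hle1 : ∑ i, (G i).edgeSet.ncard ≤ ∑ _i : Fin k, 1 :=
        Finset.sum_le_sum (fun i _ => by have := h i; omega)
      simp only [Finset.sum_const, Finset.card_univ, Fintype.card_fin, smul_eq_mul,
        mul_one] at hle1
      omega
    obtain ⟨i0, hi0⟩ := hex
    obtain ⟨X, hX, hEq⟩ := mad_exists (G i0)
    have hxpos : (0 : ℝ) < (X.card : ℝ) := by exact_mod_cast hX.card_pos
    obtain ⟨e0, he0, hMadDel⟩ : ∃ e0 ∈ (G i0).edgeSet,
        Mad (G i0) - 2 / 3 ≤ Mad ((G i0).deleteEdges {e0}) := by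
      by_cases hsub : (G i0).edgeSet ⊆
          {e : Sym2 (Fin n) | e ∈ (G i0).edgeSet ∧ ∀ v ∈ e, v ∈ X}
      · set A := {e : Sym2 (Fin n) | e ∈ (G i0).edgeSet ∧ ∀ v ∈ e, v ∈ X} with hA
        have hA2 : 2 ≤ A.ncard := le_trans hi0 (Set.ncard_le_ncard hsub (Set.toFinite _))
        obtain ⟨e1, e2, he1, he2, hne12⟩ :=
          (Set.one_lt_ncard_iff (s := A) (Set.toFinite _)).mp (by omega)
        obtain ⟨a, b, rfl⟩ : ∃ a b, e1 = s(a, b) :=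
          e1.inductionOn (fun x y => ⟨x, y, rfl⟩)
        obtain ⟨c, d, rfl⟩ : ∃ c d, e2 = s(c, d) :=
          e2.inductionOn (fun x y => ⟨x, y, rfl⟩)
        have hab : a ≠ b := by
          simpa using SimpleGraph.not_isDiag_of_mem_edgeSet _ he1.1
        have hcd : c ≠ d := by
          simpa using SimpleGraph.not_isDiag_of_mem_edgeSet _ he2.1
        have ha : a ∈ X := he1.2 a (Sym2.mem_mk_left _ _)
        have hb : b ∈ X := he1.2 b (Sym2.mem_mk_right _ _)
        have hc : c ∈ X := he2.2 c (Sym2.mem_mk_left _ _)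
        have hd : d ∈ X := he2.2 d (Sym2.mem_mk_right _ _)
        have hX3 : 3 ≤ X.card := by
          by_contra hlt
          push_neg at hlt
          have hsub2 : ({a, b} : Finset (Fin n)) ⊆ X := by
            intro v hv
            rcases Finset.mem_insert.mp hv with rfl | hv'
            · exact ha
            · rw [Finset.mem_singleton] at hv'; subst hv'; exact hb
          have hXeq : X = ({a, b} : Finset (Fin n)) :=
            (Finset.eq_of_subset_of_card_le hsub2
              (by rw [Finset.card_pair hab]; omega)).symm
          rw [hXeq] at hc hd
          rcases Finset.mem_insert.mp hc with rfl | hc'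
          · rcases Finset.mem_insert.mp hd with rfl | hd'
            · exact hcd rfl
            · rw [Finset.mem_singleton] at hd'
              subst hd'
              exact hne12 rfl
          · rw [Finset.mem_singleton] at hc'
            subst hc'
            rcases Finset.mem_insert.mp hd with rfl | hd'
            · exact hne12 Sym2.eq_swap
            · rw [Finset.mem_singleton] at hd'
              subst hd'
              exact hcd rfl
        have hc1 : 1 ≤ inducedEdgeCnt (G i0) X := by
          have hAe : A.ncard = inducedEdgeCnt (G i0) X := rfl
          omega
        have hcnt : inducedEdgeCnt ((G i0).deleteEdges {s(a, b)}) X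
            = inducedEdgeCnt (G i0) X - 1 := by
          rw [inducedEdgeCnt, inducedEdgeCnt]
          have hseteq : {e : Sym2 (Fin n) |
              e ∈ ((G i0).deleteEdges {s(a, b)}).edgeSet ∧ ∀ v ∈ e, v ∈ X}
              = A \ {s(a, b)} := by
            rw [hA]
            rw [SimpleGraph.edgeSet_deleteEdges]
            ext e
            simp only [Set.mem_diff, Set.mem_setOf_eq, Set.mem_singleton_iff]
            tauto
          rw [hseteq, Set.ncard_diff_singleton_of_mem he1]
        refine ⟨s(a, b), he1.1, ?_⟩
        have hle := le_Mad ((G i0).deleteEdges {s(a, b)}) hX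
        rw [hcnt] at hle
        have hcast : ((inducedEdgeCnt (G i0) X - 1 : ℕ) : ℝ)
            = (inducedEdgeCnt (G i0) X : ℝ) - 1 := by
          push_cast [Nat.cast_sub hc1]
          ring
        rw [hcast] at hle
        rw [hEq]
        have hx3 : (3 : ℝ) ≤ (X.card : ℝ) := by exact_mod_cast hX3
        have h2x : 2 / (X.card : ℝ) ≤ 2 / 3 := by
          rw [div_le_div_iff₀ (by linarith) (by norm_num)]
          linarith
        calc 2 * (inducedEdgeCnt (G i0) X : ℝ) / (X.card : ℝ) - 2 / 3
            ≤ 2 * (inducedEdgeCnt (G i0) X : ℝ) / (X.card : ℝ) - 2 / (X.card : ℝ) := by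
              linarith
          _ = 2 * ((inducedEdgeCnt (G i0) X : ℝ) - 1) / (X.card : ℝ) := by
              field_simp
          _ ≤ _ := hle
      · obtain ⟨e0, he0, hnotA⟩ := Set.not_subset.mp hsub
        refine ⟨e0, he0, ?_⟩
        have hcnt : inducedEdgeCnt ((G i0).deleteEdges {e0}) X = inducedEdgeCnt (G i0) X := by
          rw [inducedEdgeCnt, inducedEdgeCnt]
          congr 1
          rw [SimpleGraph.edgeSet_deleteEdges]
          ext e
          simp only [Set.mem_diff, Set.mem_setOf_eq, Set.mem_singleton_iff]
          constructor
          · rintro ⟨⟨h1, -⟩, h2⟩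
            exact ⟨h1, h2⟩
          · rintro ⟨h1, h2⟩
            refine ⟨⟨h1, fun hcontra => hnotA ?_⟩, h2⟩
            subst hcontra
            exact ⟨h1, h2⟩
        have hle := le_Mad ((G i0).deleteEdges {e0}) hX
        rw [hcnt] at hle
        rw [hEq]
        linarith
    -- construct the (k+1)-decomposition
    let G'' : Fin (k + 1) → SimpleGraph (Fin n) :=
      Fin.lastCases (SimpleGraph.fromEdgeSet {e0})
        (fun i => if i = i0 then (G i0).deleteEdges {e0} else G i)
    have hlast : G'' (Fin.last k) = SimpleGraph.fromEdgeSet {e0} := by simp [G'']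
    have hcs : ∀ i : Fin k,
        G'' i.castSucc = if i = i0 then (G i0).deleteEdges {e0} else G i := by
      intro i; simp [G'']
    have hnd : ¬ e0.IsDiag := SimpleGraph.not_isDiag_of_mem_edgeSet _ he0
    have hfromE : (SimpleGraph.fromEdgeSet {e0}).edgeSet = {e0} := by
      rw [SimpleGraph.edgeSet_fromEdgeSet]
      ext e
      simp only [Set.mem_diff, Set.mem_singleton_iff, Set.mem_setOf_eq]
      constructor
      · exact fun h => h.1
      · rintro rfl
        exact ⟨rfl, hnd⟩
    have hEcs : ∀ i : Fin k, (G'' i.castSucc).edgeSet ⊆ (G i).edgeSet := by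
      intro i
      rw [hcs]
      split_ifs with h
      · subst h
        rw [SimpleGraph.edgeSet_deleteEdges]
        exact Set.diff_subset
      · exact subset_rfl
    have hnotin : ∀ i : Fin k, e0 ∉ (G'' i.castSucc).edgeSet := by
      intro i
      rw [hcs]
      split_ifs with h
      · subst h
        rw [SimpleGraph.edgeSet_deleteEdges]
        rintro ⟨-, h2⟩
        exact h2 rfl
      · intro hmem
        exact Set.disjoint_left.mp (hdisj i0 i (fun heq => h heq.symm)) he0 hmem
    have hdec'' : IsKDecomp G'' := by
      constructor
      · intro i j hij
        induction i using Fin.lastCases with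
        | last =>
          induction j using Fin.lastCases with
          | last => exact absurd rfl hij
          | cast j =>
            rw [hlast, hfromE, Set.disjoint_left]
            intro e he
            rw [Set.mem_singleton_iff] at he
            subst he
            exact hnotin j
        | cast i =>
          induction j using Fin.lastCases with
          | last =>
            rw [hlast, hfromE, Set.disjoint_right]
            intro e he
            rw [Set.mem_singleton_iff] at he
            subst he
            exact hnotin i
          | cast j =>
            have hij' : i ≠ j := fun h => hij (by rw [h])
            exact Set.disjoint_of_subset (hEcs i) (hEcs j) (hdisj i j hij')
      · ext e
        simp only [Set.mem_iUnion]
        constructor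
        · rintro ⟨i, hi⟩
          induction i using Fin.lastCases with
          | last =>
            rw [hlast, hfromE, Set.mem_singleton_iff] at hi
            subst hi
            exact SimpleGraph.edgeSet_subset_edgeSet.mpr le_top he0
          | cast i =>
            exact SimpleGraph.edgeSet_subset_edgeSet.mpr le_top (hEcs i hi)
        · intro he
          rw [← hcover, Set.mem_iUnion] at he
          obtain ⟨i, hi⟩ := he
          by_cases hei : e = e0
          · subst hei
            exact ⟨Fin.last k, by rw [hlast, hfromE]; rfl⟩
          · rcases eq_or_ne i i0 with rfl | hne2
            · refine ⟨i.castSucc, ?_⟩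
              rw [hcs, if_pos rfl, SimpleGraph.edgeSet_deleteEdges]
              exact ⟨hi, by simpa using hei⟩
            · exact ⟨i.castSucc, by rw [hcs, if_neg hne2]; exact hi⟩
    have hsum : ∑ i, Mad (G i) + 1 / 3 ≤ ∑ j : Fin (k + 1), Mad (G'' j) := by
      rw [Fin.sum_univ_castSucc]
      have h1 : (1 : ℝ) ≤ Mad (G'' (Fin.last k)) := by
        rw [hlast]
        exact mad_single_edge e0 hnd
      have h2 : ∑ i, Mad (G i) - 2 / 3 ≤ ∑ i : Fin k, Mad (G'' i.castSucc) := by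
        have key2 : ∀ i ∈ Finset.univ,
            Mad (G i) - (if i = i0 then (2 : ℝ) / 3 else 0) ≤ Mad (G'' i.castSucc) := by
          intro i _
          rw [hcs]
          split_ifs with h
          · subst h
            exact hMadDel
          · rw [sub_zero]
        calc ∑ i, Mad (G i) - 2 / 3
            = ∑ i, (Mad (G i) - if i = i0 then (2 : ℝ) / 3 else 0) := by
              rw [Finset.sum_sub_distrib,
                Finset.sum_ite_eq' Finset.univ i0 (fun _ => (2 : ℝ) / 3)]
              simp
          _ ≤ _ := Finset.sum_le_sum key2
      linarith
    have hfin := le_csSup hbdd ⟨G'', hdec'', rfl⟩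
    rw [MSum]
    linarith
  rw [MSum, MSum] at *
  linarith


/-- monotonicity of `M(k,n)` in `n` and in `k`. -/
theorem madSum_monotone (n k : ℕ) (hn : 3 ≤ n) (hk : 1 ≤ k) :
    (k ≤ Nat.choose n 2 → MSum k (n + 1) ≥ MSum k n + 1) ∧
    (k < Nat.choose n 2 → MSum (k + 1) n ≥ MSum k n + 1 / 3) := by
  exact ⟨fun _ => part_one n k hn hk, fun h => part_two n k hn hk h⟩
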